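/- arXiv:1802.09137 — 3 statements merged into one kernel-verified Lean document; each statement's English description precedes it below -/
import Mathlib

section
/- (Cauchy-criterion characterization of conformality.) Let f : ℂ → ℂ be a homeomorphism of ℂ onto ℂ with f(0) = 0, and fix a constant δ₁ with 0 < δ₁ ≤ 1. Then the following are equivalent: (a) f is conformal at 0, i.e. the limit lim_{z→0} f(z)/z exists and is nonzero; (c) for every ε > 0 there exists r > 0 such that whenever 0 < |z₁| < r and 0 < |z₂| ≤ δ₁·|z₁|, one has |log(f(z₁)/z₁) − log(f(z₂)/z₂)|_𝒞 < ε. -/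
open MeasureTheory Complex Filter Set

/-- The distance to `0` on the cylinder `ℂ/2πiℤ`: `|w|_𝒞 = inf_{n ∈ ℤ} |w + 2πin|`. -/
noncomputable def cylDist (w : ℂ) : ℝ :=
  ⨅ n : ℤ, ‖w + 2 * Real.pi * Complex.I * (n : ℂ)‖

lemma cylDist_bdd (w : ℂ) :
    BddBelow (Set.range fun n : ℤ => ‖w + 2 * Real.pi * Complex.I * (n : ℂ)‖) :=
  ⟨0, by rintro x ⟨n, rfl⟩; exact norm_nonneg _⟩

lemma log_sub_log (a b : ℂ) (ha : a ≠ 0) (hb : b ≠ 0) :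
    ∃ n : ℤ, Complex.log a - Complex.log b = Complex.log (a / b) + n * (2 * Real.pi * Complex.I) := by
  have h : Complex.exp (Complex.log a - Complex.log b - Complex.log (a / b)) = 1 := by
    rw [Complex.exp_sub, Complex.exp_sub, Complex.exp_log ha, Complex.exp_log hb,
      Complex.exp_log (div_ne_zero ha hb)]
    field_simp
  obtain ⟨n, hn⟩ := Complex.exp_eq_one_iff.1 h
  exact ⟨n, by linear_combination hn⟩

lemma cylDist_log_sub_le (a b : ℂ) (ha : a ≠ 0) (hb : b ≠ 0) :
    cylDist (Complex.log a - Complex.log b) ≤ ‖Complex.log (a / b)‖ := by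
  obtain ⟨n, hn⟩ := log_sub_log a b ha hb
  have := ciInf_le (cylDist_bdd (Complex.log a - Complex.log b)) (-n)
  refine this.trans_eq ?_
  congr 1
  rw [hn]
  push_cast
  ring

lemma abs_log_div_lt_of_cylDist_lt (a b : ℂ) (ha : a ≠ 0) (hb : b ≠ 0) {ε : ℝ}
    (hεπ : ε ≤ Real.pi) (h : cylDist (Complex.log a - Complex.log b) < ε) :
    ‖Complex.log (a / b)‖ < ε := by
  obtain ⟨n, hn⟩ := log_sub_log a b ha hb
  obtain ⟨k, hk⟩ := exists_lt_of_ciInf_lt h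
  rw [hn] at hk
  have hk' : ‖Complex.log (a / b) + 2 * Real.pi * Complex.I * ((n + k : ℤ) : ℂ)‖ < ε := by
    refine lt_of_eq_of_lt ?_ hk
    congr 1
    push_cast
    ring
  rcases eq_or_ne (n + k) 0 with hm | hm
  · simpa [hm] using hk'
  · exfalso
    set m : ℤ := n + k with hmdef
    have him : |(Complex.log (a / b)).im + 2 * Real.pi * (m : ℝ)| ≤
        ‖Complex.log (a / b) + 2 * Real.pi * Complex.I * (m : ℂ)‖ := by
      have := Complex.abs_im_le_norm (Complex.log (a / b) + 2 * Real.pi * Complex.I * (m : ℂ))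
      simpa using this
    have harg : |(Complex.log (a / b)).im| ≤ Real.pi := by
      rw [Complex.log_im]
      exact Complex.abs_arg_le_pi _
    have hm1 : (1 : ℝ) ≤ |(m : ℝ)| := by
      have : (1 : ℤ) ≤ |m| := Int.one_le_abs hm
      exact_mod_cast this
    have h2 : 2 * Real.pi * |(m : ℝ)| - |(Complex.log (a / b)).im| ≤
        |(Complex.log (a / b)).im + 2 * Real.pi * (m : ℝ)| := by
      have h4 := abs_add_le ((Complex.log (a / b)).im + 2 * Real.pi * (m : ℝ)) (-(Complex.log (a / b)).im)
      rw [abs_neg] at h4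
      have h3 : |2 * Real.pi * (m : ℝ)| = 2 * Real.pi * |(m : ℝ)| := by
        rw [abs_mul, abs_mul, abs_of_pos Real.pi_pos]; norm_num
      have h5 : |2 * Real.pi * (m : ℝ)| =
          |(Complex.log (a / b)).im + 2 * Real.pi * (m : ℝ) + -(Complex.log (a / b)).im| := by
        congr 1; ring
      have h6 := (h3.symm.trans h5).trans_le h4
      linarith
    have hpi := Real.pi_pos
    nlinarith [hk'.trans_le hεπ, him]


set_option maxHeartbeats 1000000 in
/-- **Cauchy-criterion characterization of conformality.** For a homeomorphism `f` of `ℂ`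
with `f 0 = 0` and a fixed `0 < δ₁ ≤ 1`, `f` is conformal at `0` (i.e. `lim_{z→0} f z/z`
exists and is nonzero) iff for every `ε > 0` there is `r > 0` such that `0 < |z₁| < r`
and `0 < |z₂| ≤ δ₁|z₁|` imply `|log(f z₁/z₁) - log(f z₂/z₂)|_𝒞 < ε`. -/
theorem conformality_iff_cauchy_criterion (f : ℂ ≃ₜ ℂ) (hf0 : f 0 = 0)
    (δ₁ : ℝ) (hδ₁0 : 0 < δ₁) (hδ₁1 : δ₁ ≤ 1) :
    (∃ c : ℂ, c ≠ 0 ∧ Tendsto (fun z : ℂ => f z / z) (nhdsWithin 0 {0}ᶜ) (nhds c)) ↔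
    (∀ ε > 0, ∃ r > 0, ∀ z₁ z₂ : ℂ,
        0 < ‖z₁‖ → ‖z₁‖ < r →
        0 < ‖z₂‖ → ‖z₂‖ ≤ δ₁ * ‖z₁‖ →
        cylDist (Complex.log (f z₁ / z₁) - Complex.log (f z₂ / z₂)) < ε) := by
  have hfne : ∀ z : ℂ, z ≠ 0 → f z / z ≠ 0 := by
    intro z hz
    have hfz : f z ≠ 0 := fun h0 => hz (f.injective (h0.trans hf0.symm))
    exact div_ne_zero hfz hz
  constructor
  · rintro ⟨c, hc0, hc⟩ ε hε
    have hcont : ContinuousAt Complex.log 1 := continuousAt_clog (by norm_num)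
    obtain ⟨η', hη'0, hη'⟩ := Metric.continuousAt_iff.1 hcont ε hε
    have hcpos : 0 < ‖c‖ := norm_pos_iff.mpr hc0
    set η := min (‖c‖ / 2) (‖c‖ * η' / 4) with hηdef
    have hηpos : 0 < η := lt_min (by positivity) (by positivity)
    obtain ⟨r, hr0, hr⟩ := Metric.tendsto_nhdsWithin_nhds.1 hc η hηpos
    refine ⟨r, hr0, fun z₁ z₂ h₁0 h₁r h₂0 h₂le => ?_⟩
    have hz₁ne : z₁ ≠ 0 := by intro h0; rw [h0] at h₁0; simp at h₁0
    have hz₂ne : z₂ ≠ 0 := by intro h0; rw [h0] at h₂0; simp at h₂0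
    have hz₂r : ‖z₂‖ < r := lt_of_le_of_lt h₂le (by nlinarith)
    have hd1 : ‖f z₁ / z₁ - c‖ < η := by
      have := hr (x := z₁) hz₁ne (by simpa [Complex.dist_eq] using h₁r)
      simpa [Complex.dist_eq] using this
    have hd2 : ‖f z₂ / z₂ - c‖ < η := by
      have := hr (x := z₂) hz₂ne (by simpa [Complex.dist_eq] using hz₂r)
      simpa [Complex.dist_eq] using this
    have hg2 : ‖c‖ / 2 ≤ ‖f z₂ / z₂‖ := by
      have h1 : ‖c - (f z₂ / z₂)‖ < η := by
        rw [← norm_neg]; simpa [neg_sub] using hd2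
      have h2 := (le_abs_self (‖c‖ - ‖f z₂ / z₂‖)).trans
        (abs_norm_sub_norm_le c (f z₂ / z₂))
      have hη1 : η ≤ ‖c‖ / 2 := min_le_left _ _
      linarith
    have hg2pos : 0 < ‖f z₂ / z₂‖ := lt_of_lt_of_le (by positivity) hg2
    have hratio : ‖f z₁ / z₁ / (f z₂ / z₂) - 1‖ < η' := by
      have heq : f z₁ / z₁ / (f z₂ / z₂) - 1 = (f z₁ / z₁ - f z₂ / z₂) / (f z₂ / z₂) := by
        rw [sub_div, div_self (hfne z₂ hz₂ne)]
      rw [heq, norm_div]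
      have hnum : ‖f z₁ / z₁ - f z₂ / z₂‖ < 2 * η := by
        have := norm_sub_le_norm_sub_add_norm_sub (f z₁ / z₁) c (f z₂ / z₂)
        have h2' : ‖c - f z₂ / z₂‖ < η := by
          rw [← norm_neg]; simpa [neg_sub] using hd2
        linarith
      have hη2 : η ≤ ‖c‖ * η' / 4 := min_le_right _ _
      rw [div_lt_iff₀ hg2pos]
      nlinarith
    calc cylDist (Complex.log (f z₁ / z₁) - Complex.log (f z₂ / z₂))
        ≤ ‖Complex.log (f z₁ / z₁ / (f z₂ / z₂))‖ :=
          cylDist_log_sub_le _ _ (hfne z₁ hz₁ne) (hfne z₂ hz₂ne)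
      _ < ε := by
          have := hη' (x := f z₁ / z₁ / (f z₂ / z₂)) (by simpa [Complex.dist_eq] using hratio)
          simpa [Complex.dist_eq, Complex.log_one] using this
  · intro h
    set g := fun z : ℂ => f z / z with hg
    obtain ⟨r₁, hr₁0, hr₁⟩ := h Real.pi Real.pi_pos
    set z₀ : ℂ := ((r₁ / 2 : ℝ) : ℂ) with hz₀
    have hz₀abs : ‖z₀‖ = r₁ / 2 := by
      rw [hz₀, Complex.norm_real, Real.norm_eq_abs, abs_of_pos (by linarith)]
    have hz₀ne : z₀ ≠ 0 := by
      intro h0; rw [h0] at hz₀abs; simp at hz₀abs; linarith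
    have hgz₀ : 0 < ‖g z₀‖ := norm_pos_iff.mpr (hfne z₀ hz₀ne)
    set M := ‖g z₀‖ * Real.exp (2 * Real.pi) with hM
    set m := ‖g z₀‖ * Real.exp (-(2 * Real.pi)) with hm
    have hMpos : 0 < M := by positivity
    have hmpos : 0 < m := by positivity
    have key : ∀ w : ℂ, 0 < ‖w‖ → ‖w‖ < r₁ →
        m ≤ ‖g w‖ ∧ ‖g w‖ ≤ M := by
      intro w hw0 hwr
      set w' : ℂ := ((δ₁ * min (‖w‖) (r₁ / 2) / 2 : ℝ) : ℂ) with hw'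
      have hminpos : 0 < min (‖w‖) (r₁ / 2) := lt_min hw0 (by linarith)
      have hw'abs : ‖w'‖ = δ₁ * min (‖w‖) (r₁ / 2) / 2 := by
        rw [hw', Complex.norm_real, Real.norm_eq_abs, abs_of_pos (by positivity)]
      have hw'0 : 0 < ‖w'‖ := by rw [hw'abs]; positivity
      have hle1 : ‖w'‖ ≤ δ₁ * ‖w‖ := by
        rw [hw'abs]
        have := min_le_left (‖w‖) (r₁ / 2)
        nlinarith
      have hle2 : ‖w'‖ ≤ δ₁ * ‖z₀‖ := by
        rw [hw'abs, hz₀abs]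
        have := min_le_right (‖w‖) (r₁ / 2)
        nlinarith
      have h1 := hr₁ w w' hw0 hwr hw'0 hle1
      have h2 := hr₁ z₀ w' (by rw [hz₀abs]; linarith) (by rw [hz₀abs]; linarith) hw'0 hle2
      have hwne : w ≠ 0 := by intro h0; rw [h0] at hw0; simp at hw0
      have hw'ne : w' ≠ 0 := by intro h0; rw [h0] at hw'0; simp at hw'0
      have hu := abs_log_div_lt_of_cylDist_lt _ _ (hfne w hwne) (hfne w' hw'ne) le_rfl h1
      have hv := abs_log_div_lt_of_cylDist_lt _ _ (hfne z₀ hz₀ne) (hfne w' hw'ne) le_rfl h2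
      set u := Complex.log (g w / g w') with hu'
      set v := Complex.log (g z₀ / g w') with hv'
      have hgww' : g w / g w' = Complex.exp u :=
        (Complex.exp_log (div_ne_zero (hfne w hwne) (hfne w' hw'ne))).symm
      have hgz₀w' : g z₀ / g w' = Complex.exp v :=
        (Complex.exp_log (div_ne_zero (hfne z₀ hz₀ne) (hfne w' hw'ne))).symm
      have hgw'ne : g w' ≠ 0 := hfne w' hw'ne
      have hgz₀ne : g z₀ ≠ 0 := hfne z₀ hz₀ne
      have heq : g w = g z₀ * Complex.exp (u - v) := by
        rw [Complex.exp_sub, ← hgww', ← hgz₀w']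
        field_simp
      have habs : ‖g w‖ = ‖g z₀‖ * Real.exp ((u - v).re) := by
        rw [heq, norm_mul, Complex.norm_exp]
      have hre : |(u - v).re| ≤ ‖u‖ + ‖v‖ := by
        calc |(u - v).re| ≤ ‖u - v‖ := Complex.abs_re_le_norm _
          _ ≤ ‖u‖ + ‖v‖ := by
              simpa using norm_sub_le u v
      have hre1 : (u - v).re ≤ 2 * Real.pi := by
        have := le_abs_self ((u - v).re); linarith
      have hre2 : -(2 * Real.pi) ≤ (u - v).re := by
        have := neg_abs_le ((u - v).re); linarith
      constructor
      · rw [habs, hm]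
        exact mul_le_mul_of_nonneg_left (Real.exp_le_exp.2 hre2) (le_of_lt hgz₀)
      · rw [habs, hM]
        exact mul_le_mul_of_nonneg_left (Real.exp_le_exp.2 hre1) (le_of_lt hgz₀)
    have hl : (nhdsWithin (0:ℂ) {0}ᶜ).NeBot := NormedField.nhdsNE_neBot 0
    have hpi1 : (1:ℝ) ≤ Real.pi := by linarith [Real.pi_gt_three]
    have hcauchy : Cauchy (Filter.map g (nhdsWithin (0:ℂ) {0}ᶜ)) := by
      rw [Metric.cauchy_iff]
      refine ⟨hl.map g, ?_⟩
      intro ε εpos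
      set ε' := min 1 (ε / (4 * M + 1)) with hε'def
      have hε'0 : 0 < ε' := lt_min one_pos (by positivity)
      have hε'1 : ε' ≤ 1 := min_le_left _ _
      have hε'π : ε' ≤ Real.pi := hε'1.trans hpi1
      have hε'ε : ε' ≤ ε / (4 * M + 1) := min_le_right _ _
      obtain ⟨r₂, hr₂0, hr₂⟩ := h ε' hε'0
      set r := min r₁ r₂ with hrdef
      have hrpos : 0 < r := lt_min hr₁0 hr₂0
      refine ⟨g '' {z : ℂ | 0 < ‖z‖ ∧ ‖z‖ < r}, ?_, ?_⟩
      · rw [Filter.mem_map]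
        have hs : {z : ℂ | 0 < ‖z‖ ∧ ‖z‖ < r} ∈ nhdsWithin (0:ℂ) {0}ᶜ := by
          rw [mem_nhdsWithin]
          refine ⟨Metric.ball 0 r, Metric.isOpen_ball, Metric.mem_ball_self hrpos, ?_⟩
          rintro z ⟨hz1, hz2⟩
          refine ⟨norm_pos_iff.mpr hz2, ?_⟩
          simpa [Complex.dist_eq] using hz1
        exact Filter.mem_of_superset hs (fun z hz => Set.mem_image_of_mem g hz)
      · rintro x ⟨z₁, ⟨h₁0, h₁r⟩, rfl⟩ y ⟨z₂, ⟨h₂0, h₂r⟩, rfl⟩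
        set w : ℂ := ((δ₁ * min (‖z₁‖) (‖z₂‖) / 2 : ℝ) : ℂ) with hw
        have hminpos : 0 < min (‖z₁‖) (‖z₂‖) := lt_min h₁0 h₂0
        have hwabs : ‖w‖ = δ₁ * min (‖z₁‖) (‖z₂‖) / 2 := by
          rw [hw, Complex.norm_real, Real.norm_eq_abs, abs_of_pos (by positivity)]
        have hw0 : 0 < ‖w‖ := by rw [hwabs]; positivity
        have hwle1 : ‖w‖ ≤ δ₁ * ‖z₁‖ := by
          rw [hwabs]
          have := min_le_left (‖z₁‖) (‖z₂‖)
          nlinarith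
        have hwle2 : ‖w‖ ≤ δ₁ * ‖z₂‖ := by
          rw [hwabs]
          have := min_le_right (‖z₁‖) (‖z₂‖)
          nlinarith
        have h1 := hr₂ z₁ w h₁0 (h₁r.trans_le (min_le_right _ _)) hw0 hwle1
        have h2 := hr₂ z₂ w h₂0 (h₂r.trans_le (min_le_right _ _)) hw0 hwle2
        have hz₁ne : z₁ ≠ 0 := by intro h0; rw [h0] at h₁0; simp at h₁0
        have hz₂ne : z₂ ≠ 0 := by intro h0; rw [h0] at h₂0; simp at h₂0
        have hwne : w ≠ 0 := by intro h0; rw [h0] at hw0; simp at hw0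
        have hu := abs_log_div_lt_of_cylDist_lt _ _ (hfne z₁ hz₁ne) (hfne w hwne) hε'π h1
        have hv := abs_log_div_lt_of_cylDist_lt _ _ (hfne z₂ hz₂ne) (hfne w hwne) hε'π h2
        set u := Complex.log (g z₁ / g w) with hu'
        set v := Complex.log (g z₂ / g w) with hv'
        have hwr₁ : ‖w‖ < r₁ := by
          have h3 : ‖w‖ ≤ ‖z₁‖ := by
            rw [hwabs]
            nlinarith [min_le_left (‖z₁‖) (‖z₂‖)]
          exact lt_of_le_of_lt h3 (h₁r.trans_le (min_le_left _ _))
        have hgwM : ‖g w‖ ≤ M := (key w hw0 hwr₁).2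
        have hgz₁ : g z₁ = g w * Complex.exp u := by
          have h' := (div_eq_iff (hfne w hwne)).1
            (Complex.exp_log (div_ne_zero (hfne z₁ hz₁ne) (hfne w hwne))).symm
          exact h'.trans (mul_comm _ _)
        have hgz₂ : g z₂ = g w * Complex.exp v := by
          have h' := (div_eq_iff (hfne w hwne)).1
            (Complex.exp_log (div_ne_zero (hfne z₂ hz₂ne) (hfne w hwne))).symm
          exact h'.trans (mul_comm _ _)
        have heq : g z₁ - g z₂ = g w * (Complex.exp u - Complex.exp v) := by
          rw [hgz₁, hgz₂]; ring
        have e1 : ‖Complex.exp u - 1‖ ≤ 2 * ‖u‖ :=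
          Complex.norm_exp_sub_one_le (le_of_lt (lt_of_lt_of_le hu hε'1))
        have e2 : ‖Complex.exp v - 1‖ ≤ 2 * ‖v‖ :=
          Complex.norm_exp_sub_one_le (le_of_lt (lt_of_lt_of_le hv hε'1))
        have etri : ‖Complex.exp u - Complex.exp v‖ ≤
            ‖Complex.exp u - 1‖ + ‖1 - Complex.exp v‖ := by
          have := norm_sub_le_norm_sub_add_norm_sub (Complex.exp u) 1 (Complex.exp v)
          linarith
        have e2' : ‖1 - Complex.exp v‖ ≤ 2 * ‖v‖ := by
          rw [← norm_neg, neg_sub]; exact e2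
        have hdist : dist (g z₁) (g z₂) = ‖g z₁ - g z₂‖ := Complex.dist_eq _ _
        rw [hdist, heq, norm_mul]
        have habsu : (0:ℝ) ≤ ‖u‖ := norm_nonneg u
        have habsv : (0:ℝ) ≤ ‖v‖ := norm_nonneg v
        have hgw0 : (0:ℝ) ≤ ‖g w‖ := norm_nonneg _
        have hfinal : ‖Complex.exp u - Complex.exp v‖ ≤ 4 * ε' := by
          nlinarith
        calc ‖g w‖ * ‖Complex.exp u - Complex.exp v‖
            ≤ M * (4 * ε') := by nlinarith
          _ < ε := by
              rw [le_div_iff₀ (by positivity : (0:ℝ) < 4 * M + 1)] at hε'ε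
              nlinarith
    obtain ⟨c, hc⟩ := CompleteSpace.complete hcauchy
    refine ⟨c, ?_, hc⟩
    have hev : ∀ᶠ z in nhdsWithin (0:ℂ) {0}ᶜ, m ≤ ‖g z‖ := by
      have hs : {z : ℂ | 0 < ‖z‖ ∧ ‖z‖ < r₁} ∈ nhdsWithin (0:ℂ) {0}ᶜ := by
        rw [mem_nhdsWithin]
        refine ⟨Metric.ball 0 r₁, Metric.isOpen_ball, Metric.mem_ball_self hr₁0, ?_⟩
        rintro z ⟨hz1, hz2⟩
        refine ⟨norm_pos_iff.mpr hz2, ?_⟩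
        simpa [Complex.dist_eq] using hz1
      filter_upwards [hs] with z hz
      exact (key z hz.1 hz.2).1
    have habs : Tendsto (fun z => ‖g z‖) (nhdsWithin (0:ℂ) {0}ᶜ)
        (nhds (‖c‖)) := (continuous_norm.tendsto c).comp hc
    have hmc : m ≤ ‖c‖ := ge_of_tendsto habs hev
    intro h0
    rw [h0] at hmc
    simp at hmc
    linarith
end

section
/- (Lower bound for J_*.) Let z₁, z₂ ∈ ℂ with 0 < |z₂| < |z₁|. Then J_*(z₁, z₂) = ∬_ℂ |φ_{z₁,z₂}(z)| dx dy ≥ 2π·(1/|1 − z₂/z₁|)·log(|z₁|/|z₂|). -/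
open MeasureTheory Complex Filter Set

/-- The quadratic differential `φ_{z₁,z₂}(z) = z₁/(z(z-z₁)(z-z₂))`. -/
noncomputable def phiQD (z₁ z₂ z : ℂ) : ℂ := z₁ / (z * (z - z₁) * (z - z₂))

section JstarAux

open Real intervalIntegral
open scoped ENNReal Real


theorem my_lintegral_polar (g : ℝ × ℝ → ℝ≥0∞) :
    ∫⁻ p in polarCoord.target, ENNReal.ofReal p.1 * g (polarCoord.symm p) = ∫⁻ p, g p := by
  simpa only [smul_eq_mul] using lintegral_comp_polarCoord_symm g

theorem my_complex_lintegral_polar (g : ℂ → ℝ≥0∞) :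
    ∫⁻ p in polarCoord.target, ENNReal.ofReal p.1 * g (Complex.polarCoord.symm p) =
      ∫⁻ z, g z := by
  rw [← (Complex.volume_preserving_equiv_real_prod.symm).lintegral_comp_emb
    Complex.measurableEquivRealProd.symm.measurableEmbedding g,
    ← my_lintegral_polar (fun p => g (Complex.measurableEquivRealProd.symm p))]
  rfl


lemma circle_bound (z₁ z₂ : ℂ) (h₂ : 0 < ‖z₂‖) (h₁₂ : ‖z₂‖ < ‖z₁‖)
    {r : ℝ} (hr : r ∈ Set.Ioo (‖z₂‖) (‖z₁‖)) :
    2 * π / ‖z₁ - z₂‖ ≤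
      ∫ θ in (0:ℝ)..2 * π,
        r * ‖((circleMap 0 r θ - z₁) * (circleMap 0 r θ - z₂))⁻¹‖ := by
  have hr0 : 0 < r := h₂.trans hr.1
  have hne : z₁ ≠ z₂ := fun h => by rw [h] at h₁₂; exact lt_irrefl _ h₁₂
  have hsub : z₂ - z₁ ≠ 0 := sub_ne_zero.2 hne.symm
  -- the two basic circle integrals
  have h1 : (∮ z in C(0, r), (z - z₂)⁻¹) = 2 * π * Complex.I :=
    circleIntegral.integral_sub_inv_of_mem_ball (by
      simpa [Metric.mem_ball, Complex.dist_eq] using hr.1)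
  have h2 : (∮ z in C(0, r), (z - z₁)⁻¹) = 0 := by
    refine circleIntegral_eq_zero_of_differentiable_on_off_countable hr0.le
      Set.countable_empty ?_ ?_
    · refine ContinuousOn.inv₀ ((continuous_id.sub continuous_const).continuousOn) ?_
      intro z hz
      refine sub_ne_zero.2 fun h => ?_
      rw [h] at hz
      simp only [Metric.mem_closedBall, Complex.dist_eq, sub_zero] at hz
      exact absurd (hz.trans_lt hr.2) (lt_irrefl _)
    · intro z hz
      refine (differentiableAt_id.sub_const z₁).inv (sub_ne_zero.2 fun h => ?_)
      simp only [id_eq] at h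
      rw [h] at hz
      simp only [Set.diff_empty, Metric.mem_ball, Complex.dist_eq, sub_zero] at hz
      exact absurd (hz.trans hr.2) (lt_irrefl _)
  -- the circle map never hits z₁ or z₂
  have hw1 : ∀ θ : ℝ, circleMap 0 r θ - z₁ ≠ 0 := by
    intro θ h
    have h1' : ‖z₁‖ = r := by
      rw [← sub_eq_zero.1 h, norm_circleMap_zero, _root_.abs_of_pos hr0]
    linarith [hr.2]
  have hw2 : ∀ θ : ℝ, circleMap 0 r θ - z₂ ≠ 0 := by
    intro θ h
    have h2' : ‖z₂‖ = r := by
      rw [← sub_eq_zero.1 h, norm_circleMap_zero, _root_.abs_of_pos hr0]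
    linarith [hr.1]
  -- circle integrability
  have hci1 : CircleIntegrable (fun z => (z - z₁)⁻¹) 0 r := by
    rw [circleIntegrable_sub_inv_iff]
    right
    simp only [Metric.mem_sphere, Complex.dist_eq, sub_zero, abs_of_pos hr0]
    exact ne_of_gt hr.2
  have hci2 : CircleIntegrable (fun z => (z - z₂)⁻¹) 0 r := by
    rw [circleIntegrable_sub_inv_iff]
    right
    simp only [Metric.mem_sphere, Complex.dist_eq, sub_zero, abs_of_pos hr0]
    exact ne_of_lt hr.1
  -- value of the contour integral of g
  have hg : (∮ z in C(0, r), ((z - z₁) * (z - z₂))⁻¹) =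
      (z₂ - z₁)⁻¹ * (2 * π * Complex.I) := by
    have hEq : Set.EqOn (fun z => ((z - z₁) * (z - z₂))⁻¹)
        (fun z => (z₂ - z₁)⁻¹ • ((z - z₂)⁻¹ - (z - z₁)⁻¹)) (Metric.sphere 0 r) := by
      intro z hz
      simp only [Metric.mem_sphere, Complex.dist_eq, sub_zero] at hz
      have hz1 : z - z₁ ≠ 0 := by
        refine sub_ne_zero.2 fun h => ?_
        rw [h] at hz
        linarith [hr.2]
      have hz2 : z - z₂ ≠ 0 := by
        refine sub_ne_zero.2 fun h => ?_
        rw [h] at hz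
        linarith [hr.1]
      simp only [smul_eq_mul]
      field_simp
      ring
    rw [circleIntegral.integral_congr hr0.le hEq]
    rw [circleIntegral.integral_smul, circleIntegral.integral_sub hci2 hci1, h1, h2, sub_zero,
      smul_eq_mul]
  -- norm bound
  have hnorm : 2 * π / ‖z₁ - z₂‖ =
      ‖∮ z in C(0, r), ((z - z₁) * (z - z₂))⁻¹‖ := by
    rw [hg]
    simp only [norm_mul, norm_inv, Complex.norm_I, Complex.norm_real,
      Complex.norm_two]
    rw [← norm_neg (z₂ - z₁), neg_sub]
    rw [Real.norm_of_nonneg Real.pi_pos.le]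
    ring
  rw [hnorm]
  rw [circleIntegral]
  refine (intervalIntegral.norm_integral_le_integral_norm (by positivity)).trans_eq ?_
  refine intervalIntegral.integral_congr fun θ _ => ?_
  rw [deriv_circleMap, norm_smul]
  simp only [norm_mul, norm_circleMap_zero, Complex.norm_I, mul_one,
    _root_.abs_of_pos hr0]


lemma polar_symm_eq_circleMap (r θ : ℝ) :
    Complex.polarCoord.symm (r, θ) = circleMap 0 r θ := by
  simp only [Complex.polarCoord_symm_apply, circleMap, zero_add]
  rw [mul_comm (θ : ℂ) Complex.I] at *
  rw [show Complex.I * (θ:ℂ) = (θ:ℂ) * Complex.I from mul_comm _ _, Complex.exp_mul_I]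
  push_cast
  ring



-- per-radius bound, assuming the circle bound
lemma inner_bound (z₁ z₂ : ℂ) (h₂ : 0 < ‖z₂‖) (h₁₂ : ‖z₂‖ < ‖z₁‖)
    {r : ℝ} (hr : r ∈ Set.Ioo (‖z₂‖) (‖z₁‖))
    (hcb : 2 * π / ‖z₁ - z₂‖ ≤
      ∫ θ in (0:ℝ)..2 * π,
        r * ‖((circleMap 0 r θ - z₁) * (circleMap 0 r θ - z₂))⁻¹‖) :
    ENNReal.ofReal (2 * π * (‖z₁‖ / ‖z₁ - z₂‖) / r) ≤
      ∫⁻ θ in Set.Ioo (-π) π,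
        ENNReal.ofReal (‖z₁‖ *
          ‖((circleMap 0 r θ - z₁) * (circleMap 0 r θ - z₂))⁻¹‖) := by
  have hr0 : 0 < r := h₂.trans hr.1
  set b := ‖z₁‖ with hb
  set Q : ℝ → ℝ := fun θ => b * ‖((circleMap 0 r θ - z₁) * (circleMap 0 r θ - z₂))⁻¹‖ with hQ
  have hw1 : ∀ θ : ℝ, circleMap 0 r θ - z₁ ≠ 0 := by
    intro θ h
    have h1' : ‖z₁‖ = r := by
      rw [← sub_eq_zero.1 h, norm_circleMap_zero, _root_.abs_of_pos hr0]
    linarith [hr.2]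
  have hw2 : ∀ θ : ℝ, circleMap 0 r θ - z₂ ≠ 0 := by
    intro θ h
    have h2' : ‖z₂‖ = r := by
      rw [← sub_eq_zero.1 h, norm_circleMap_zero, _root_.abs_of_pos hr0]
    linarith [hr.1]
  have hQc : Continuous Q := by
    apply continuous_const.mul
    apply Continuous.norm
    apply Continuous.inv₀
    · exact ((continuous_circleMap 0 r).sub continuous_const).mul
        (((continuous_circleMap 0 r).sub continuous_const))
    · intro θ
      exact mul_ne_zero (hw1 θ) (hw2 θ)
  have hQnn : ∀ θ, 0 ≤ Q θ := fun θ => by positivity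
  have hQint : IntegrableOn Q (Set.Ioo (-π) π) :=
    (hQc.integrableOn_Icc (a := -π) (b := π)).mono_set Set.Ioo_subset_Icc_self
  rw [← ofReal_integral_eq_lintegral_ofReal hQint
    (Filter.Eventually.of_forall fun θ => hQnn θ)]
  apply ENNReal.ofReal_le_ofReal
  -- convert the set integral to the interval integral over 0..2π
  have hper : Function.Periodic Q (2 * π) := fun θ => by
    simp only [hQ, periodic_circleMap 0 r θ]
  have hIoo : ∫ θ in Set.Ioo (-π) π, Q θ = ∫ θ in (0:ℝ)..2 * π, Q θ := by
    rw [← MeasureTheory.integral_Ioc_eq_integral_Ioo,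
      ← intervalIntegral.integral_of_le (by linarith [Real.pi_pos] : (-π:ℝ) ≤ π)]
    have := hper.intervalIntegral_add_eq (t := -π) (s := 0)
    simp only [neg_add_cancel, zero_add] at this
    have h2 : ∫ θ in (-π:ℝ)..π, Q θ = ∫ θ in (-π:ℝ)..(-π + 2 * π), Q θ := by congr 1; ring
    rw [h2, this]
  rw [hIoo]
  -- compare with the circle bound
  have key : ∫ θ in (0:ℝ)..2 * π, Q θ =
      (b / r) * ∫ θ in (0:ℝ)..2 * π,
        r * ‖((circleMap 0 r θ - z₁) * (circleMap 0 r θ - z₂))⁻¹‖ := by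
    rw [← intervalIntegral.integral_const_mul]
    refine intervalIntegral.integral_congr fun θ _ => ?_
    simp only [hQ]
    rw [← mul_assoc, div_mul_cancel₀ _ hr0.ne']
  rw [key]
  calc 2 * π * (b / ‖z₁ - z₂‖) / r
      = (b / r) * (2 * π / ‖z₁ - z₂‖) := by ring
    _ ≤ (b / r) * ∫ θ in (0:ℝ)..2 * π,
        r * ‖((circleMap 0 r θ - z₁) * (circleMap 0 r θ - z₂))⁻¹‖ := by
        apply mul_le_mul_of_nonneg_left hcb (by positivity)


lemma integrableOn_inv_abs_ball (ε : ℝ) :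
    IntegrableOn (fun z : ℂ => (‖z‖)⁻¹) (Metric.ball 0 ε) := by
  have hmeas : Measurable fun z : ℂ => (‖z‖)⁻¹ :=
    (continuous_norm.measurable).inv
  constructor
  · exact (hmeas.aestronglyMeasurable).restrict
  · rw [HasFiniteIntegral]
    have h1 : ∀ z : ℂ, ‖(‖z‖)⁻¹‖ₑ = ENNReal.ofReal (‖z‖)⁻¹ := by
      intro z
      rw [← Real.enorm_eq_ofReal (by positivity)]
    simp_rw [h1]
    have h2 : ∫⁻ z in Metric.ball (0:ℂ) ε, ENNReal.ofReal (‖z‖)⁻¹ =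
        ∫⁻ z, (Metric.ball (0:ℂ) ε).indicator (fun z => ENNReal.ofReal (‖z‖)⁻¹) z := by
      rw [lintegral_indicator measurableSet_ball]
    rw [h2, ← my_complex_lintegral_polar]
    calc ∫⁻ p in polarCoord.target, ENNReal.ofReal p.1 *
          (Metric.ball (0:ℂ) ε).indicator (fun z => ENNReal.ofReal (‖z‖)⁻¹)
            (Complex.polarCoord.symm p)
        ≤ ∫⁻ p in polarCoord.target, (Set.Ioo (0:ℝ) ε ×ˢ Set.Ioo (-π) π).indicator
            (fun _ => (1:ℝ≥0∞)) p := by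
          refine setLIntegral_mono' polarCoord.open_target.measurableSet ?_
          intro p hp
          rw [polarCoord_target, Set.mem_prod] at hp
          have hp1 : 0 < p.1 := hp.1
          by_cases hmem : Complex.polarCoord.symm p ∈ Metric.ball (0:ℂ) ε
          · have hlt : p.1 < ε := by
              have := hmem
              rw [Metric.mem_ball, Complex.dist_eq, sub_zero, Complex.norm_polarCoord_symm,
                _root_.abs_of_pos hp1] at this
              exact this
            rw [Set.indicator_of_mem hmem, Set.indicator_of_mem
              (Set.mem_prod.2 ⟨Set.mem_Ioo.2 ⟨hp1, hlt⟩, hp.2⟩)]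
            rw [Complex.norm_polarCoord_symm, _root_.abs_of_pos hp1,
              ← ENNReal.ofReal_mul hp1.le, mul_inv_cancel₀ hp1.ne', ENNReal.ofReal_one]
          · rw [Set.indicator_of_notMem hmem, mul_zero]
            exact zero_le
      _ ≤ ∫⁻ p, (Set.Ioo (0:ℝ) ε ×ˢ Set.Ioo (-π) π).indicator (fun _ => (1:ℝ≥0∞)) p :=
          setLIntegral_le_lintegral _ _
      _ < ⊤ := by
          rw [lintegral_indicator (measurableSet_Ioo.prod measurableSet_Ioo)]
          simp only [lintegral_const, one_mul, Measure.restrict_apply_univ]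
          rw [Measure.volume_eq_prod, Measure.prod_prod, Real.volume_Ioo, Real.volume_Ioo]
          exact ENNReal.mul_lt_top ENNReal.ofReal_lt_top ENNReal.ofReal_lt_top

lemma integrableOn_inv_abs_sub_ball (p : ℂ) (ε : ℝ) :
    IntegrableOn (fun z : ℂ => (‖z - p‖)⁻¹) (Metric.ball p ε) := by
  have h0 := integrableOn_inv_abs_ball ε
  rw [← integrable_indicator_iff measurableSet_ball] at h0
  have hfun : (Metric.ball p ε).indicator (fun z : ℂ => (‖z - p‖)⁻¹) =
      fun z : ℂ => (Metric.ball (0:ℂ) ε).indicator (fun w => (‖w‖)⁻¹) (z + -p) := by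
    funext z
    by_cases hz : z ∈ Metric.ball p ε
    · rw [Set.indicator_of_mem hz, Set.indicator_of_mem (by
        simpa [Metric.mem_ball, Complex.dist_eq, sub_eq_add_neg] using hz)]
      rw [sub_eq_add_neg]
    · rw [Set.indicator_of_notMem hz, Set.indicator_of_notMem (by
        simpa [Metric.mem_ball, Complex.dist_eq, sub_eq_add_neg] using hz)]
  have key : Integrable ((Metric.ball p ε).indicator fun z : ℂ => (‖z - p‖)⁻¹) := by
    rw [hfun]; exact h0.comp_add_right (-p)
  exact (integrable_indicator_iff measurableSet_ball).1 key

lemma aux_div {num X Y W mY mW : ℝ} (h0 : 0 ≤ num) (hX : 0 ≤ X) (hYp : 0 < mY) (hWp : 0 < mW)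
    (hY : mY ≤ Y) (hW : mW ≤ W) : num / (X * Y * W) ≤ num / (mY * mW) * X⁻¹ := by
  rcases eq_or_lt_of_le hX with h | h
  · simp [← h]
  · have h1 : num / (X * Y * W) ≤ num / (X * mY * mW) := by
      apply div_le_div_of_nonneg_left h0 (by positivity)
      calc X * mY * mW = X * (mY * mW) := by ring
        _ ≤ X * (Y * W) := mul_le_mul_of_nonneg_left
            (mul_le_mul hY hW hWp.le (by linarith)) hX
        _ = X * Y * W := by ring
    have h2 : num / (X * mY * mW) = num / (mY * mW) * X⁻¹ := by
      rw [show X * mY * mW = mY * mW * X from by ring, ← div_div, div_eq_mul_inv]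
    linarith

lemma abs_lower (u v : ℂ) : ‖u‖ - ‖v‖ ≤ ‖u - v‖ := by
  have := abs_norm_sub_norm_le u v
  have := abs_le.1 this
  linarith [this.2]

lemma phi_integrable (z₁ z₂ : ℂ) (h₂ : 0 < ‖z₂‖)
    (h₁₂ : ‖z₂‖ < ‖z₁‖) :
    Integrable (fun z : ℂ => ‖phiQD z₁ z₂ z‖) := by
  have hb : 0 < ‖z₁‖ := h₂.trans h₁₂
  have hne : z₁ ≠ z₂ := fun h => by rw [h] at h₁₂; exact lt_irrefl _ h₁₂
  set a := ‖z₂‖ with ha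
  set b := ‖z₁‖ with hbdef
  set d := ‖z₁ - z₂‖ with hd
  have hd0 : 0 < d := by
    rw [hd]
    exact norm_pos_iff.2 (sub_ne_zero.2 hne)
  set ε := min (a / 2) (d / 2) with hε
  have hε0 : 0 < ε := lt_min (by linarith) (by linarith)
  have hεa : ε ≤ a / 2 := min_le_left _ _
  have hεd : ε ≤ d / 2 := min_le_right _ _
  have hεb : ε < b := by linarith
  have habs : ∀ z : ℂ, ‖phiQD z₁ z₂ z‖
      = b / (‖z‖ * ‖z - z₁‖ * ‖z - z₂‖) := by
    intro z
    rw [phiQD, norm_div, norm_mul, norm_mul]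
  have hnn : ∀ z : ℂ, 0 ≤ ‖phiQD z₁ z₂ z‖ := fun z => norm_nonneg _
  have hmeas : AEStronglyMeasurable (fun z : ℂ => ‖phiQD z₁ z₂ z‖) volume := by
    apply Measurable.aestronglyMeasurable
    apply continuous_norm.measurable.comp
    unfold phiQD
    fun_prop
  set R := 2 * b + 2 with hR
  set S0 := Metric.ball (0:ℂ) ε
  set S1 := Metric.ball z₁ ε
  set S2 := Metric.ball z₂ ε
  set SM := Metric.closedBall (0:ℂ) R \ (S0 ∪ S1 ∪ S2) with hSM
  set ST := (Metric.closedBall (0:ℂ) R)ᶜ with hST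
  have hcover : (Set.univ : Set ℂ) ⊆ S0 ∪ S1 ∪ S2 ∪ SM ∪ ST := by
    intro z _
    by_cases hz0 : z ∈ S0
    · exact Or.inl (Or.inl (Or.inl (Or.inl hz0)))
    by_cases hz1 : z ∈ S1
    · exact Or.inl (Or.inl (Or.inl (Or.inr hz1)))
    by_cases hz2 : z ∈ S2
    · exact Or.inl (Or.inl (Or.inr hz2))
    by_cases hzR : z ∈ Metric.closedBall (0:ℂ) R
    · exact Or.inl (Or.inr ⟨hzR, fun h => by
        rcases h with (h | h) | h
        exacts [hz0 h, hz1 h, hz2 h]⟩)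
    · exact Or.inr hzR
  -- bounds on each ball
  have I0 : IntegrableOn (fun z : ℂ => ‖phiQD z₁ z₂ z‖) S0 := by
    have hbnd : IntegrableOn
        (fun z : ℂ => b / ((b - ε) * (a - ε)) * (‖z - 0‖)⁻¹) S0 :=
      (integrableOn_inv_abs_sub_ball 0 ε).const_mul _
    refine Integrable.mono' hbnd hmeas.restrict ?_
    refine (ae_restrict_iff' Metric.isOpen_ball.measurableSet).2 (Filter.Eventually.of_forall ?_)
    intro z hz
    rw [Real.norm_eq_abs, _root_.abs_of_nonneg (hnn z), habs z]
    rw [Metric.mem_ball, Complex.dist_eq, sub_zero] at hz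
    have hY : b - ε ≤ ‖z - z₁‖ := by
      have := abs_lower z₁ z
      rw [norm_sub_rev z₁ z] at this
      linarith
    have hW : a - ε ≤ ‖z - z₂‖ := by
      have := abs_lower z₂ z
      rw [norm_sub_rev z₂ z] at this
      linarith
    have := aux_div (num := b) (X := ‖z‖) hb.le (norm_nonneg z)
      (by linarith : (0:ℝ) < b - ε) (by linarith : (0:ℝ) < a - ε) hY hW
    simpa [sub_zero] using this
  have I1 : IntegrableOn (fun z : ℂ => ‖phiQD z₁ z₂ z‖) S1 := by
    have hbnd : IntegrableOn
        (fun z : ℂ => b / ((b - ε) * (d - ε)) * (‖z - z₁‖)⁻¹) S1 :=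
      (integrableOn_inv_abs_sub_ball z₁ ε).const_mul _
    refine Integrable.mono' hbnd hmeas.restrict ?_
    refine (ae_restrict_iff' Metric.isOpen_ball.measurableSet).2 (Filter.Eventually.of_forall ?_)
    intro z hz
    rw [Real.norm_eq_abs, _root_.abs_of_nonneg (hnn z), habs z]
    rw [Metric.mem_ball, Complex.dist_eq] at hz
    have hX : b - ε ≤ ‖z‖ := by
      have := abs_lower z₁ z
      have h2 : ‖z₁ - z‖ = ‖z - z₁‖ := norm_sub_rev z₁ z
      linarith
    have hW : d - ε ≤ ‖z - z₂‖ := by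
      have h3 : ‖(z₁ - z₂) - (z - z₂)‖ = ‖z - z₁‖ := by
        rw [show (z₁ - z₂) - (z - z₂) = z₁ - z from by ring, norm_sub_rev z₁ z]
      have := abs_lower (z₁ - z₂) (z - z₂)
      rw [h3] at this
      linarith
    rw [show ‖z‖ * ‖z - z₁‖ * ‖z - z₂‖
      = ‖z - z₁‖ * ‖z‖ * ‖z - z₂‖ from by ring]
    exact aux_div hb.le (norm_nonneg _) (by linarith : (0:ℝ) < b - ε)
      (by linarith : (0:ℝ) < d - ε) hX hW
  have I2 : IntegrableOn (fun z : ℂ => ‖phiQD z₁ z₂ z‖) S2 := by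
    have hbnd : IntegrableOn
        (fun z : ℂ => b / ((a - ε) * (d - ε)) * (‖z - z₂‖)⁻¹) S2 :=
      (integrableOn_inv_abs_sub_ball z₂ ε).const_mul _
    refine Integrable.mono' hbnd hmeas.restrict ?_
    refine (ae_restrict_iff' Metric.isOpen_ball.measurableSet).2 (Filter.Eventually.of_forall ?_)
    intro z hz
    rw [Real.norm_eq_abs, _root_.abs_of_nonneg (hnn z), habs z]
    rw [Metric.mem_ball, Complex.dist_eq] at hz
    have hX : a - ε ≤ ‖z‖ := by
      have := abs_lower z₂ z
      have h2 : ‖z₂ - z‖ = ‖z - z₂‖ := norm_sub_rev z₂ z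
      linarith
    have hW : d - ε ≤ ‖z - z₁‖ := by
      have h3 : ‖(z₂ - z₁) - (z - z₁)‖ = ‖z - z₂‖ := by
        rw [show (z₂ - z₁) - (z - z₁) = z₂ - z from by ring, norm_sub_rev z₂ z]
      have := abs_lower (z₂ - z₁) (z - z₁)
      rw [h3] at this
      have h4 : ‖z₂ - z₁‖ = d := by rw [hd, norm_sub_rev z₂ z₁]
      linarith
    rw [show ‖z‖ * ‖z - z₁‖ * ‖z - z₂‖
      = ‖z - z₂‖ * ‖z‖ * ‖z - z₁‖ from by ring]
    exact aux_div hb.le (norm_nonneg _) (by linarith : (0:ℝ) < a - ε)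
      (by linarith : (0:ℝ) < d - ε) hX hW
  have hSMmeas : MeasurableSet SM :=
    measurableSet_closedBall.diff
      ((Metric.isOpen_ball.union Metric.isOpen_ball).union Metric.isOpen_ball).measurableSet
  have IM : IntegrableOn (fun z : ℂ => ‖phiQD z₁ z₂ z‖) SM := by
    refine Integrable.mono' (g := fun _ => b / (ε * ε * ε))
      (integrableOn_const ((measure_mono Set.diff_subset).trans_lt
        measure_closedBall_lt_top).ne) hmeas.restrict ?_
    refine (ae_restrict_iff' hSMmeas).2 (Filter.Eventually.of_forall ?_)
    intro z hz
    rw [Real.norm_eq_abs, _root_.abs_of_nonneg (hnn z), habs z]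
    obtain ⟨-, hz'⟩ := hz
    simp only [Set.mem_union, not_or] at hz'
    have hX : ε ≤ ‖z‖ := by
      have := hz'.1.1
      rw [Metric.mem_ball, Complex.dist_eq, sub_zero, not_lt] at this
      exact this
    have hY : ε ≤ ‖z - z₁‖ := by
      have := hz'.1.2
      rw [Metric.mem_ball, Complex.dist_eq, not_lt] at this
      exact this
    have hW : ε ≤ ‖z - z₂‖ := by
      have := hz'.2
      rw [Metric.mem_ball, Complex.dist_eq, not_lt] at this
      exact this
    apply div_le_div_of_nonneg_left hb.le (by positivity)
    exact mul_le_mul (mul_le_mul hX hY hε0.le (norm_nonneg _)) hW hε0.le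
      (by positivity)
  have IT : IntegrableOn (fun z : ℂ => ‖phiQD z₁ z₂ z‖) ST := by
    have hTint : Integrable (fun z : ℂ => 32 * b * (1 + ‖z‖) ^ (-(3:ℝ))) := by
      refine ((integrable_one_add_norm (E := ℂ) (r := 3) ?_)).const_mul _
      rw [Complex.finrank_real_complex]
      norm_num
    refine Integrable.mono' hTint.integrableOn hmeas.restrict ?_
    refine (ae_restrict_iff' measurableSet_closedBall.compl).2
      (Filter.Eventually.of_forall ?_)
    intro z hz
    rw [Real.norm_eq_abs, _root_.abs_of_nonneg (hnn z), habs z]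
    rw [Set.mem_compl_iff, Metric.mem_closedBall, Complex.dist_eq, sub_zero, not_le] at hz
    set X := ‖z‖ with hX
    have hX1 : 1 ≤ X := by linarith
    have hY : X / 2 ≤ ‖z - z₁‖ := by
      have := abs_lower z z₁
      linarith
    have hW : X / 2 ≤ ‖z - z₂‖ := by
      have := abs_lower z z₂
      linarith
    have hrpow : (1 + ‖z‖) ^ (-(3:ℝ)) = ((1 + X) ^ 3)⁻¹ := by
      rw [Real.rpow_neg (by linarith),
        show (3:ℝ) = ((3:ℕ):ℝ) from by norm_num, Real.rpow_natCast]
    rw [hrpow]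
    have step1 : b / (X * ‖z - z₁‖ * ‖z - z₂‖)
        ≤ b / (X * (X / 2) * (X / 2)) := by
      apply div_le_div_of_nonneg_left hb.le (by positivity)
      exact mul_le_mul (mul_le_mul (le_refl X) hY (by positivity) (by positivity)) hW
        (by positivity) (by positivity)
    have step2 : b / (X * (X / 2) * (X / 2)) ≤ 32 * b * ((1 + X) ^ 3)⁻¹ := by
      have h1X : 1 + X ≤ 2 * X := by linarith
      have h3 : (1 + X) ^ 3 ≤ (2 * X) ^ 3 := pow_le_pow_left₀ (by linarith) h1X 3
      have e1 : b / (X * (X / 2) * (X / 2)) = 32 * b * ((2 * X) ^ 3)⁻¹ := by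
        field_simp
        ring
      have e2 : ((2 * X) ^ 3)⁻¹ ≤ ((1 + X) ^ 3)⁻¹ :=
        inv_anti₀ (by positivity) h3
      rw [e1]
      exact mul_le_mul_of_nonneg_left e2 (by positivity)
    linarith
  have huniv : IntegrableOn (fun z : ℂ => ‖phiQD z₁ z₂ z‖) Set.univ :=
    ((((I0.union I1).union I2).union IM).union IT).mono_set hcover
  exact integrableOn_univ.1 huniv


end JstarAux

open Real
open scoped ENNReal Real

/-- **Lower bound for `J_*`.** For `0 < |z₂| < |z₁|`,
`J_*(z₁,z₂) = ∬_ℂ |φ_{z₁,z₂}| dxdy ≥ 2π·(1/|1 - z₂/z₁|)·log(|z₁|/|z₂|)`. -/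
theorem Jstar_lower_bound (z₁ z₂ : ℂ) (h₂ : 0 < ‖z₂‖)
    (h₁₂ : ‖z₂‖ < ‖z₁‖) :
    2 * Real.pi * (1 / ‖1 - z₂ / z₁‖) *
        Real.log (‖z₁‖ / ‖z₂‖) ≤
      ∫ z : ℂ, ‖phiQD z₁ z₂ z‖ := by
  have hb : 0 < ‖z₁‖ := h₂.trans h₁₂
  have hne : z₁ ≠ z₂ := fun h => by rw [h] at h₁₂; exact lt_irrefl _ h₁₂
  have hd0 : 0 < ‖z₁ - z₂‖ := norm_pos_iff.2 (sub_ne_zero.2 hne)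
  have hInt : Integrable (fun z : ℂ => ‖phiQD z₁ z₂ z‖) :=
    phi_integrable z₁ z₂ h₂ h₁₂
  have hnn : ∀ z : ℂ, 0 ≤ ‖phiQD z₁ z₂ z‖ := fun z => norm_nonneg _
  have hmeasf : Measurable (fun z : ℂ => ‖phiQD z₁ z₂ z‖) := by
    apply continuous_norm.measurable.comp
    unfold phiQD
    fun_prop
  set c := ‖z₁‖ / ‖z₁ - z₂‖ with hc
  have hc0 : 0 < c := div_pos hb hd0
  have hlog : 0 ≤ Real.log (‖z₁‖ / ‖z₂‖) :=
    Real.log_nonneg ((one_le_div h₂).2 h₁₂.le)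
  have hcoef : 1 / ‖1 - z₂ / z₁‖ = c := by
    have hz1 : z₁ ≠ 0 := fun h => by rw [h] at hb; simp at hb
    have h1 : (1 : ℂ) - z₂ / z₁ = (z₁ - z₂) / z₁ := by field_simp
    rw [h1, norm_div, one_div, inv_div]
  -- the main lintegral chain
  have main : ENNReal.ofReal (2 * π * c * Real.log (‖z₁‖ / ‖z₂‖)) ≤
      ∫⁻ z, ENNReal.ofReal (‖phiQD z₁ z₂ z‖) := by
    rw [← my_complex_lintegral_polar (fun z => ENNReal.ofReal (‖phiQD z₁ z₂ z‖))]
    have hbox : (Set.Ioo (‖z₂‖) (‖z₁‖) ×ˢ Set.Ioo (-π) π)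
        ⊆ polarCoord.target := by
      rw [polarCoord_target]
      intro p hp
      rw [Set.mem_prod] at hp ⊢
      exact ⟨Set.mem_Ioi.2 (h₂.trans hp.1.1), hp.2⟩
    refine le_trans ?_ (lintegral_mono_set hbox)
    have hHmeas : Measurable fun p : ℝ × ℝ =>
        ENNReal.ofReal p.1 * ENNReal.ofReal (‖phiQD z₁ z₂
          (Complex.polarCoord.symm p)‖) := by
      refine Measurable.mul (f := fun p : ℝ × ℝ => ENNReal.ofReal p.1)
        (g := fun p : ℝ × ℝ => ENNReal.ofReal (‖phiQD z₁ z₂ (Complex.polarCoord.symm p)‖)) ?_ ?_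
      · exact measurable_fst.ennreal_ofReal
      · apply Measurable.ennreal_ofReal
        apply hmeasf.comp
        have hcont : Continuous fun p : ℝ × ℝ => Complex.polarCoord.symm p := by
          have : (fun p : ℝ × ℝ => Complex.polarCoord.symm p)
              = fun p : ℝ × ℝ => (p.1 : ℂ) * (Real.cos p.2 + Real.sin p.2 * Complex.I) := by
            funext p
            exact Complex.polarCoord_symm_apply p
          rw [this]
          continuity
        exact hcont.measurable
    rw [Measure.volume_eq_prod, ← Measure.prod_restrict,
      lintegral_prod _ hHmeas.aemeasurable]
    -- now compare with the 1-dimensional integral of 2πc/r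
    have stepA : ∫⁻ r in Set.Ioo (‖z₂‖) (‖z₁‖),
        ENNReal.ofReal (2 * π * c / r) ≤
        ∫⁻ r in Set.Ioo (‖z₂‖) (‖z₁‖),
          ∫⁻ θ in Set.Ioo (-π) π,
            ENNReal.ofReal r * ENNReal.ofReal (‖phiQD z₁ z₂
              (Complex.polarCoord.symm (r, θ))‖) := by
      refine lintegral_mono_ae ((ae_restrict_iff' measurableSet_Ioo).2
        (Filter.Eventually.of_forall fun r hr => ?_))
      have hr0 : 0 < r := h₂.trans hr.1
      have hpoint : ∀ θ : ℝ, ENNReal.ofReal r *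
          ENNReal.ofReal (‖phiQD z₁ z₂ (Complex.polarCoord.symm (r, θ))‖)
          = ENNReal.ofReal (‖z₁‖ *
              ‖((circleMap 0 r θ - z₁) * (circleMap 0 r θ - z₂))⁻¹‖) := by
        intro θ
        rw [polar_symm_eq_circleMap, ← ENNReal.ofReal_mul hr0.le]
        congr 1
        have hw : ‖circleMap 0 r θ‖ = r := by
          rw [norm_circleMap_zero, _root_.abs_of_pos hr0]
        rw [phiQD, norm_div, norm_mul, norm_mul, hw]
        rw [norm_inv, norm_mul]
        set Y := ‖circleMap 0 r θ - z₁‖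
        set W := ‖circleMap 0 r θ - z₂‖
        rw [show r * Y * W = Y * W * r from by ring, ← div_div, mul_comm,
          div_mul_cancel₀ _ hr0.ne', div_eq_mul_inv, mul_inv]
      calc ENNReal.ofReal (2 * π * c / r)
          = ENNReal.ofReal (2 * π * (‖z₁‖ / ‖z₁ - z₂‖) / r) := by
            rw [hc]
        _ ≤ ∫⁻ θ in Set.Ioo (-π) π,
              ENNReal.ofReal (‖z₁‖ *
                ‖((circleMap 0 r θ - z₁) * (circleMap 0 r θ - z₂))⁻¹‖) :=
            inner_bound z₁ z₂ h₂ h₁₂ hr (circle_bound z₁ z₂ h₂ h₁₂ hr)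
        _ = ∫⁻ θ in Set.Ioo (-π) π,
              ENNReal.ofReal r * ENNReal.ofReal (‖phiQD z₁ z₂
                (Complex.polarCoord.symm (r, θ))‖) := by
            refine lintegral_congr fun θ => ?_
            rw [hpoint θ]
    refine le_trans (le_of_eq ?_) stepA
    -- value of the 1-dimensional integral
    have hgint : IntegrableOn (fun r : ℝ => 2 * π * c * r⁻¹)
        (Set.Ioo (‖z₂‖) (‖z₁‖)) := by
      have hcont : ContinuousOn (fun r : ℝ => 2 * π * c * r⁻¹)
          (Set.Icc (‖z₂‖) (‖z₁‖)) := by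
        apply continuousOn_const.mul
        apply ContinuousOn.inv₀ continuousOn_id
        intro x hx
        exact (h₂.trans_le hx.1).ne'
      exact (hcont.integrableOn_compact isCompact_Icc).mono_set Set.Ioo_subset_Icc_self
    have hdiv : ∀ r : ℝ, 2 * π * c / r = 2 * π * c * r⁻¹ := fun r => div_eq_mul_inv _ _
    simp_rw [hdiv]
    rw [← ofReal_integral_eq_lintegral_ofReal hgint
      ((ae_restrict_iff' measurableSet_Ioo).2 (Filter.Eventually.of_forall fun r hr => by
        have : 0 < r := h₂.trans hr.1
        positivity))]
    congr 1
    rw [← MeasureTheory.integral_Ioc_eq_integral_Ioo,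
      ← intervalIntegral.integral_of_le h₁₂.le,
      intervalIntegral.integral_const_mul, integral_inv_of_pos h₂ hb]
  -- conclude
  have hEq : ∫ z, ‖phiQD z₁ z₂ z‖
      = (∫⁻ z, ENNReal.ofReal (‖phiQD z₁ z₂ z‖)).toReal :=
    integral_eq_lintegral_of_nonneg_ae (Filter.Eventually.of_forall hnn)
      hmeasf.aestronglyMeasurable
  have hfin : ∫⁻ z, ENNReal.ofReal (‖phiQD z₁ z₂ z‖) ≠ ⊤ := by
    have h' := hInt.hasFiniteIntegral
    rw [HasFiniteIntegral] at h'
    have heq2 : ∀ z : ℂ, ‖‖phiQD z₁ z₂ z‖‖ₑ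
        = ENNReal.ofReal (‖phiQD z₁ z₂ z‖) := fun z => by
      rw [← Real.enorm_eq_ofReal (hnn z)]
    simp_rw [heq2] at h'
    exact h'.ne
  calc 2 * Real.pi * (1 / ‖1 - z₂ / z₁‖) *
        Real.log (‖z₁‖ / ‖z₂‖)
      = 2 * π * c * Real.log (‖z₁‖ / ‖z₂‖) := by rw [hcoef]
    _ = (ENNReal.ofReal (2 * π * c * Real.log (‖z₁‖ / ‖z₂‖))).toReal :=
        (ENNReal.toReal_ofReal (by positivity)).symm
    _ ≤ (∫⁻ z, ENNReal.ofReal (‖phiQD z₁ z₂ z‖)).toReal :=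
        ENNReal.toReal_mono hfin main
    _ = ∫ z : ℂ, ‖phiQD z₁ z₂ z‖ := hEq.symm
end

section
/- (Estimate on I_{p,s}.) Let k ∈ [0,1), K = (1+k)/(1−k), and let μ : ℂ → ℂ be measurable with |μ(z)| ≤ k for all z, satisfying ∬_{|z|<1} |μ(z)|²/((1−|μ(z)|²)·|z|²) dx dy < ∞. Let p > 2 and 0 < s < p. Then there exist constants C₂ > 0 and C₃ > 0 depending only on K and p such that for all 0 < r < r': I_{p,s}(μ; r) ≤ C₂·∬_{|z|<r'} |μ(z)|²/((1−|μ(z)|²)·|z|²) dx dy + (C₃/s)·(r/r')^s. In particular I_{p,s}(μ; r) < ∞ for every r > 0. -/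
open MeasureTheory Complex Filter Set Module

/-- `I_{p,s}(μ; r) = ∬_ℂ (|μ(z)|^p/(1-|μ(z)|²)^p) · dxdy/(|z|²(1+|z|/r)^s)`. -/
noncomputable def Ips (μ : ℂ → ℂ) (p s r : ℝ) : ℝ :=
  ∫ z : ℂ, ‖μ z‖ ^ p / (1 - ‖μ z‖ ^ 2) ^ p /
    (‖z‖ ^ 2 * (1 + ‖z‖ / r) ^ s)

lemma meas_cabs : Measurable (fun z : ℂ => ‖z‖) := continuous_norm.measurable
attribute [fun_prop] meas_cabs

lemma complex_tail_integrable (b : ℝ) (hb : b < -2) (c : ℝ) (hc : 0 < c) :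
    IntegrableOn (fun z : ℂ => ‖z‖ ^ b) {z : ℂ | c ≤ ‖z‖} volume := by
  have hbase : Integrable (fun z : ℂ => (1 + ‖z‖) ^ b) volume := by
    have := integrable_one_add_norm (E := ℂ) (μ := volume) (r := -b)
      (by rw [Complex.finrank_real_complex]; push_cast; linarith)
    simpa using this
  apply Integrable.mono' ((hbase.const_mul ((1/c + 1) ^ (-b))).restrict)
  · exact (Measurable.aestronglyMeasurable (by fun_prop)).restrict
  · have hset : MeasurableSet {z : ℂ | c ≤ ‖z‖} :=
      (isClosed_le continuous_const continuous_norm).measurableSet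
    rw [ae_restrict_iff' hset]
    refine Eventually.of_forall fun z hz => ?_
    have hcz : c ≤ ‖z‖ := hz
    have hz' : (0:ℝ) < ‖z‖ := lt_of_lt_of_le hc hcz
    rw [Real.norm_eq_abs, _root_.abs_of_nonneg (Real.rpow_nonneg hz'.le _)]
    have h1 : (1 + ‖z‖) ≤ (1/c + 1) * ‖z‖ := by
      have h0 : (1:ℝ) ≤ ‖z‖ / c := (le_div_iff₀ hc).2 (by linarith)
      have h2 : ‖z‖ / c = (1/c) * ‖z‖ := by ring
      nlinarith
    have key : ‖z‖ ^ b ≤ ((1 + ‖z‖) / (1/c + 1)) ^ b := by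
      apply Real.rpow_le_rpow_of_nonpos (by positivity) ?_ (by linarith)
      rw [div_le_iff₀ (by positivity)]
      linarith [h1]
    calc ‖z‖ ^ b ≤ ((1 + ‖z‖) / (1/c + 1)) ^ b := key
      _ = (1/c + 1) ^ (-b) * (1 + ‖z‖) ^ b := by
          rw [Real.div_rpow (by positivity) (by positivity), Real.rpow_neg (by positivity)]
          ring

lemma complex_tail_integral (b : ℝ) (hb : b < -2) (c : ℝ) (hc : 0 < c) :
    ∫ z in {z : ℂ | c ≤ ‖z‖}, ‖z‖ ^ b = (2 * Real.pi) * (-c ^ (b + 2) / (b + 2)) := by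
  have hset : MeasurableSet {z : ℂ | c ≤ ‖z‖} :=
    (isClosed_le continuous_const continuous_norm).measurableSet
  have h1 : ∫ z in {z : ℂ | c ≤ ‖z‖}, ‖z‖ ^ b
      = ∫ z : ℂ, (Ici c).indicator (fun y : ℝ => y ^ b) ‖z‖ := by
    rw [← integral_indicator hset]
    congr 1
  rw [h1, integral_fun_norm_addHaar volume (fun y : ℝ => (Ici c).indicator (fun y : ℝ => y ^ b) y)]
  have hdim : finrank ℝ ℂ = 2 := Complex.finrank_real_complex
  rw [hdim]
  have hvol : volume.real (Metric.ball (0:ℂ) 1) = Real.pi := by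
    simp [Measure.real, Complex.volume_ball]
  rw [hvol]
  have hinner : ∫ y in Ioi (0:ℝ), y ^ (2 - 1) • (Ici c).indicator (fun y : ℝ => y ^ b) y
      = -c ^ (b + 2) / (b + 2) := by
    have e1 : (fun y : ℝ => y ^ (2 - 1) • (Ici c).indicator (fun y : ℝ => y ^ b) y)
        = fun y : ℝ => (Ici c).indicator (fun y : ℝ => y * y ^ b) y := by
      ext y
      by_cases hy : c ≤ y <;> simp [Set.indicator_apply, hy]
    rw [e1, setIntegral_indicator measurableSet_Ici]
    have e2 : Ioi (0:ℝ) ∩ Ici c = Ici c := inter_eq_right.mpr fun y hy => lt_of_lt_of_le hc hy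
    rw [e2, integral_Ici_eq_integral_Ioi]
    have e3 : ∫ y in Ioi c, y * y ^ b = ∫ y in Ioi c, y ^ (b + 1) := by
      refine setIntegral_congr_fun measurableSet_Ioi fun y hy => ?_
      have hy' : (0:ℝ) < y := lt_trans hc hy
      rw [Real.rpow_add hy', Real.rpow_one]
      ring
    rw [e3, integral_Ioi_rpow_of_lt (by linarith) hc, show b + 1 + 1 = b + 2 by ring]
  rw [hinner]
  simp [smul_eq_mul]
  ring

lemma aux_ratio_bound (k p t : ℝ) (hk0 : 0 ≤ k) (hk1 : k < 1) (hp : 2 < p)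
    (ht0 : 0 ≤ t) (htk : t ≤ k) :
    t ^ p / (1 - t ^ 2) ^ p ≤ (k ^ (p - 2) / (1 - k ^ 2) ^ (p - 1)) * (t ^ 2 / (1 - t ^ 2)) := by
  have hk2 : (0:ℝ) < 1 - k ^ 2 := by nlinarith
  have hut : 1 - k ^ 2 ≤ 1 - t ^ 2 := by nlinarith
  have ht2 : (0:ℝ) < 1 - t ^ 2 := lt_of_lt_of_le hk2 hut
  have h1 : t ^ p = t ^ (p - 2) * t ^ 2 := by
    rw [← Real.rpow_natCast t 2, ← Real.rpow_add_of_nonneg ht0 (by linarith) (by norm_num)]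
    norm_num
  have h2 : (1 - t ^ 2) ^ p = (1 - t ^ 2) ^ (p - 1) * (1 - t ^ 2) := by
    nth_rewrite 3 [← Real.rpow_one (1 - t ^ 2)]
    rw [← Real.rpow_add ht2]
    norm_num
  rw [h1, h2, ← div_mul_div_comm]
  apply mul_le_mul_of_nonneg_right ?_ (div_nonneg (sq_nonneg t) ht2.le)
  apply div_le_div₀ (by positivity) (Real.rpow_le_rpow ht0 htk (by linarith))
    (Real.rpow_pos_of_pos hk2 _) (Real.rpow_le_rpow hk2.le hut (by linarith))

lemma aux_ratio_bound2 (k p t : ℝ) (hk0 : 0 ≤ k) (hk1 : k < 1) (hp : 2 < p)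
    (ht0 : 0 ≤ t) (htk : t ≤ k) :
    t ^ p / (1 - t ^ 2) ^ p ≤ k ^ p / (1 - k ^ 2) ^ p := by
  have hk2 : (0:ℝ) < 1 - k ^ 2 := by nlinarith
  have hut : 1 - k ^ 2 ≤ 1 - t ^ 2 := by nlinarith
  apply div_le_div₀ (by positivity) (Real.rpow_le_rpow ht0 htk (by linarith))
    (Real.rpow_pos_of_pos hk2 _) (Real.rpow_le_rpow hk2.le hut (by linarith))

set_option maxHeartbeats 1000000 in
/-- **Estimate on `I_{p,s}`.** If `|μ| ≤ k < 1` and `∬_{|z|<1} |μ|²/((1-|μ|²)|z|²) < ∞`,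
then for `p > 2`, `0 < s < p`, the integrand of `I_{p,s}(μ; r)` is integrable for every
`r > 0` and there exist constants `C₂, C₃ > 0` depending only on `K = (1+k)/(1-k)` and `p`
such that for all `0 < r < r'`,
`I_{p,s}(μ; r) ≤ C₂ ∬_{|z|<r'} |μ|²/((1-|μ|²)|z|²) dxdy + (C₃/s)(r/r')^s`. -/
theorem estimate_on_Ips (k p : ℝ) (hk0 : 0 ≤ k) (hk1 : k < 1) (hp : 2 < p) :
    ∃ C₂ > 0, ∃ C₃ > 0, ∀ μ : ℂ → ℂ, Measurable μ → (∀ z, ‖μ z‖ ≤ k) →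
      IntegrableOn
        (fun z : ℂ => ‖μ z‖ ^ 2 / ((1 - ‖μ z‖ ^ 2) * ‖z‖ ^ 2))
        {z : ℂ | ‖z‖ < 1} volume →
      ∀ s : ℝ, 0 < s → s < p →
        (∀ r : ℝ, 0 < r → Integrable
          (fun z : ℂ => ‖μ z‖ ^ p / (1 - ‖μ z‖ ^ 2) ^ p /
            (‖z‖ ^ 2 * (1 + ‖z‖ / r) ^ s)) volume) ∧
        ∀ r r' : ℝ, 0 < r → r < r' →
          Ips μ p s r ≤
            C₂ * (∫ z in {z : ℂ | ‖z‖ < r'},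
                ‖μ z‖ ^ 2 / ((1 - ‖μ z‖ ^ 2) * ‖z‖ ^ 2)) +
              (C₃ / s) * (r / r') ^ s := by
  have hk2 : (0:ℝ) < 1 - k ^ 2 := by nlinarith
  have ha0' : (0:ℝ) ≤ k ^ (p - 2) / (1 - k ^ 2) ^ (p - 1) :=
    div_nonneg (Real.rpow_nonneg hk0 _) (Real.rpow_nonneg hk2.le _)
  have hM0' : (0:ℝ) ≤ k ^ p / (1 - k ^ 2) ^ p :=
    div_nonneg (Real.rpow_nonneg hk0 _) (Real.rpow_nonneg hk2.le _)
  refine ⟨k ^ (p - 2) / (1 - k ^ 2) ^ (p - 1) + 1, by linarith,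
    2 * Real.pi * (k ^ p / (1 - k ^ 2) ^ p + 1), by nlinarith [Real.pi_pos], ?_⟩
  intro μ hμm hμk hint s hs0 hsp
  set a := k ^ (p - 2) / (1 - k ^ 2) ^ (p - 1) with ha
  set M := k ^ p / (1 - k ^ 2) ^ p with hM
  have ha0 : 0 ≤ a := ha0'
  have hM0 : 0 ≤ M := hM0'
  set g : ℂ → ℝ :=
    fun z : ℂ => ‖μ z‖ ^ 2 / ((1 - ‖μ z‖ ^ 2) * ‖z‖ ^ 2)
    with hgdef
  have habs : ∀ z, 0 ≤ ‖μ z‖ := fun z => norm_nonneg _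
  have hu : ∀ z, 1 - k ^ 2 ≤ 1 - ‖μ z‖ ^ 2 := fun z => by
    nlinarith [habs z, hμk z]
  have hupos : ∀ z, (0:ℝ) < 1 - ‖μ z‖ ^ 2 := fun z => lt_of_lt_of_le hk2 (hu z)
  have hg0 : ∀ z, 0 ≤ g z := fun z => by
    rw [hgdef]
    exact div_nonneg (sq_nonneg _) (mul_nonneg (hupos z).le (sq_nonneg _))
  have hgm : Measurable g := by rw [hgdef]; fun_prop
  have hf0 : ∀ r : ℝ, 0 < r → ∀ z : ℂ,
      0 ≤ ‖μ z‖ ^ p / (1 - ‖μ z‖ ^ 2) ^ p /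
      (‖z‖ ^ 2 * (1 + ‖z‖ / r) ^ s) := by
    intro r hr z
    have h1 : (0:ℝ) ≤ ‖z‖ / r := div_nonneg (norm_nonneg _) hr.le
    exact div_nonneg (div_nonneg (Real.rpow_nonneg (habs z) p) (Real.rpow_nonneg (hupos z).le p))
      (mul_nonneg (sq_nonneg _) (Real.rpow_nonneg (by linarith) s))
  have hfm : ∀ r : ℝ, Measurable fun z : ℂ =>
      ‖μ z‖ ^ p / (1 - ‖μ z‖ ^ 2) ^ p /
      (‖z‖ ^ 2 * (1 + ‖z‖ / r) ^ s) := fun r => by fun_prop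
  -- pointwise bound by `a * g`
  have hfg : ∀ r : ℝ, 0 < r → ∀ z : ℂ,
      ‖μ z‖ ^ p / (1 - ‖μ z‖ ^ 2) ^ p /
        (‖z‖ ^ 2 * (1 + ‖z‖ / r) ^ s) ≤ a * g z := by
    intro r hr z
    rcases eq_or_lt_of_le (norm_nonneg z) with hx | hx
    · have h0 : ‖z‖ ^ 2 * (1 + ‖z‖ / r) ^ s = 0 := by
        rw [← hx]
        simp
      rw [h0, div_zero]
      exact mul_nonneg ha0 (hg0 z)
    · have hd1 : (1:ℝ) ≤ (1 + ‖z‖ / r) ^ s := by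
        calc (1:ℝ) = 1 ^ s := (Real.one_rpow s).symm
          _ ≤ (1 + ‖z‖ / r) ^ s := by
              apply Real.rpow_le_rpow (by norm_num) ?_ hs0.le
              have : 0 ≤ ‖z‖ / r := div_nonneg hx.le hr.le
              linarith
      have hN0 : 0 ≤ ‖μ z‖ ^ p / (1 - ‖μ z‖ ^ 2) ^ p :=
        div_nonneg (Real.rpow_nonneg (habs z) p) (Real.rpow_nonneg (hupos z).le p)
      have hN : ‖μ z‖ ^ p / (1 - ‖μ z‖ ^ 2) ^ p
          ≤ a * (‖μ z‖ ^ 2 / (1 - ‖μ z‖ ^ 2)) := by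
        rw [ha]
        exact aux_ratio_bound k p _ hk0 hk1 hp (habs z) (hμk z)
      have hx2 : (0:ℝ) < ‖z‖ ^ 2 := by positivity
      calc ‖μ z‖ ^ p / (1 - ‖μ z‖ ^ 2) ^ p /
            (‖z‖ ^ 2 * (1 + ‖z‖ / r) ^ s)
          ≤ ‖μ z‖ ^ p / (1 - ‖μ z‖ ^ 2) ^ p /
            (‖z‖ ^ 2 * 1) := by
            apply div_le_div_of_nonneg_left hN0 (by nlinarith) (by nlinarith)
        _ = ‖μ z‖ ^ p / (1 - ‖μ z‖ ^ 2) ^ p / ‖z‖ ^ 2 := by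
            rw [mul_one]
        _ ≤ a * (‖μ z‖ ^ 2 / (1 - ‖μ z‖ ^ 2)) / ‖z‖ ^ 2 :=
            (div_le_div_iff_of_pos_right hx2).mpr hN
        _ = a * g z := by
            rw [hgdef, mul_div_assoc, div_div]
  -- pointwise tail bound
  have hftail : ∀ r : ℝ, 0 < r → ∀ z : ℂ, 0 < ‖z‖ →
      ‖μ z‖ ^ p / (1 - ‖μ z‖ ^ 2) ^ p /
        (‖z‖ ^ 2 * (1 + ‖z‖ / r) ^ s)
      ≤ M * r ^ s * ‖z‖ ^ (-(2 + s)) := by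
    intro r hr z hx
    have hN : ‖μ z‖ ^ p / (1 - ‖μ z‖ ^ 2) ^ p ≤ M := by
      rw [hM]
      exact aux_ratio_bound2 k p _ hk0 hk1 hp (habs z) (hμk z)
    have hD : ‖z‖ ^ ((2:ℝ) + s) * r ^ (-s)
        ≤ ‖z‖ ^ 2 * (1 + ‖z‖ / r) ^ s := by
      have h1 : (‖z‖ / r) ^ s ≤ (1 + ‖z‖ / r) ^ s := by
        apply Real.rpow_le_rpow (by positivity) (by linarith) hs0.le
      have h2 : ‖z‖ ^ ((2:ℝ) + s) * r ^ (-s)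
          = ‖z‖ ^ 2 * (‖z‖ / r) ^ s := by
        rw [Real.rpow_add hx, Real.div_rpow hx.le hr.le, Real.rpow_neg hr.le,
          show ‖z‖ ^ (2:ℝ) = ‖z‖ ^ 2 from by
            rw [show (2:ℝ) = ((2:ℕ):ℝ) by norm_num, Real.rpow_natCast]]
        ring
      rw [h2]
      nlinarith [sq_nonneg (‖z‖)]
    have hDpos : (0:ℝ) < ‖z‖ ^ ((2:ℝ) + s) * r ^ (-s) :=
      mul_pos (Real.rpow_pos_of_pos hx _) (Real.rpow_pos_of_pos hr _)
    calc ‖μ z‖ ^ p / (1 - ‖μ z‖ ^ 2) ^ p /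
          (‖z‖ ^ 2 * (1 + ‖z‖ / r) ^ s)
        ≤ M / (‖z‖ ^ ((2:ℝ) + s) * r ^ (-s)) :=
          div_le_div₀ hM0 hN hDpos hD
      _ = M * r ^ s * ‖z‖ ^ (-(2 + s)) := by
          have e1 := (Real.rpow_pos_of_pos hx ((2:ℝ) + s)).ne'
          have e2 := (Real.rpow_pos_of_pos hr s).ne'
          rw [Real.rpow_neg hr.le, Real.rpow_neg hx.le]
          field_simp
  -- integrability
  have hA : MeasurableSet {z : ℂ | ‖z‖ < 1} :=
    measurableSet_lt meas_cabs measurable_const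
  have hIf : ∀ r : ℝ, 0 < r → Integrable
      (fun z : ℂ => ‖μ z‖ ^ p / (1 - ‖μ z‖ ^ 2) ^ p /
        (‖z‖ ^ 2 * (1 + ‖z‖ / r) ^ s)) volume := by
    intro r hr
    have h1 : IntegrableOn
        (fun z : ℂ => ‖μ z‖ ^ p / (1 - ‖μ z‖ ^ 2) ^ p /
          (‖z‖ ^ 2 * (1 + ‖z‖ / r) ^ s))
        {z : ℂ | ‖z‖ < 1} volume := by
      apply Integrable.mono' (hint.const_mul a) ((hfm r).aestronglyMeasurable.restrict)
      refine Eventually.of_forall fun z => ?_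
      rw [Real.norm_eq_abs, _root_.abs_of_nonneg (hf0 r hr z)]
      exact hfg r hr z
    have h2 : IntegrableOn
        (fun z : ℂ => ‖μ z‖ ^ p / (1 - ‖μ z‖ ^ 2) ^ p /
          (‖z‖ ^ 2 * (1 + ‖z‖ / r) ^ s))
        {z : ℂ | ‖z‖ < 1}ᶜ volume := by
      have hAc : {z : ℂ | ‖z‖ < 1}ᶜ = {z : ℂ | (1:ℝ) ≤ ‖z‖} := by
        ext z
        simp [not_lt]
      rw [hAc]
      apply Integrable.mono'
        (((complex_tail_integrable (-(2 + s)) (by linarith) 1 one_pos)).const_mul (M * r ^ s))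
        ((hfm r).aestronglyMeasurable.restrict)
      rw [ae_restrict_iff' ((isClosed_le continuous_const continuous_norm).measurableSet)]
      refine Eventually.of_forall fun z hz => ?_
      have hz1 : (1:ℝ) ≤ ‖z‖ := hz
      have hx : 0 < ‖z‖ := by linarith
      rw [Real.norm_eq_abs, _root_.abs_of_nonneg (hf0 r hr z)]
      exact hftail r hr z hx
    have h3 := h1.union h2
    rw [Set.union_compl_self] at h3
    exact integrableOn_univ.mp h3
  refine ⟨hIf, ?_⟩
  intro r r' hr hrr'
  have hr' : (0:ℝ) < r' := lt_trans hr hrr'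
  have hS : MeasurableSet {z : ℂ | ‖z‖ < r'} :=
    measurableSet_lt meas_cabs measurable_const
  have hIf' := hIf r hr
  -- g is integrable on the disc of radius r'
  have hIgS : IntegrableOn g {z : ℂ | ‖z‖ < r'} volume := by
    have hsplit : {z : ℂ | ‖z‖ < r'}
        = ({z : ℂ | ‖z‖ < r'} ∩ {z : ℂ | ‖z‖ < 1})
          ∪ ({z : ℂ | ‖z‖ < r'} \ {z : ℂ | ‖z‖ < 1}) :=
      (Set.inter_union_diff _ _).symm
    rw [hsplit]
    apply IntegrableOn.union
    · exact hint.mono_set inter_subset_right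
    · refine Measure.integrableOn_of_bounded (M := k ^ 2 / (1 - k ^ 2)) ?_
        hgm.aestronglyMeasurable ?_
      · apply ne_of_lt
        apply lt_of_le_of_lt (measure_mono (t := Metric.ball (0:ℂ) r') ?_) measure_ball_lt_top
        intro z hz
        rw [Metric.mem_ball, dist_zero_right]
        exact hz.1
      · rw [ae_restrict_iff' (hS.diff hA)]
        refine Eventually.of_forall fun z hz => ?_
        have hx1 : (1:ℝ) ≤ ‖z‖ := not_lt.mp hz.2
        rw [Real.norm_eq_abs, _root_.abs_of_nonneg (hg0 z), hgdef]
        apply div_le_div₀ (by positivity) (by nlinarith [habs z, hμk z]) hk2 ?_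
        have hx2 : (1:ℝ) ≤ ‖z‖ ^ 2 := by nlinarith
        nlinarith [hu z, hupos z, mul_le_mul_of_nonneg_left hx2 (hupos z).le]
  -- estimate the integral over the disc
  have hIS : ∫ z in {z : ℂ | ‖z‖ < r'},
        ‖μ z‖ ^ p / (1 - ‖μ z‖ ^ 2) ^ p /
          (‖z‖ ^ 2 * (1 + ‖z‖ / r) ^ s)
      ≤ (a + 1) * ∫ z in {z : ℂ | ‖z‖ < r'}, g z := by
    have h1 : ∫ z in {z : ℂ | ‖z‖ < r'},
          ‖μ z‖ ^ p / (1 - ‖μ z‖ ^ 2) ^ p /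
            (‖z‖ ^ 2 * (1 + ‖z‖ / r) ^ s)
        ≤ ∫ z in {z : ℂ | ‖z‖ < r'}, a * g z := by
      apply setIntegral_mono_on hIf'.integrableOn (hIgS.const_mul a) hS
      intro z _
      exact hfg r hr z
    have h2 : (0:ℝ) ≤ ∫ z in {z : ℂ | ‖z‖ < r'}, g z :=
      setIntegral_nonneg hS fun z _ => hg0 z
    calc _ ≤ ∫ z in {z : ℂ | ‖z‖ < r'}, a * g z := h1
      _ = a * ∫ z in {z : ℂ | ‖z‖ < r'}, g z := integral_const_mul a _
      _ ≤ (a + 1) * ∫ z in {z : ℂ | ‖z‖ < r'}, g z := by nlinarith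
  -- estimate the integral over the complement
  have hScomp : {z : ℂ | ‖z‖ < r'}ᶜ = {z : ℂ | r' ≤ ‖z‖} := by
    ext z
    simp [not_lt]
  have hItail : ∫ z in {z : ℂ | ‖z‖ < r'}ᶜ,
        ‖μ z‖ ^ p / (1 - ‖μ z‖ ^ 2) ^ p /
          (‖z‖ ^ 2 * (1 + ‖z‖ / r) ^ s)
      ≤ (2 * Real.pi * (M + 1) / s) * (r / r') ^ s := by
    have hti := complex_tail_integrable (-(2 + s)) (by linarith) r' hr'
    have htv := complex_tail_integral (-(2 + s)) (by linarith) r' hr'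
    have h1 : ∫ z in {z : ℂ | ‖z‖ < r'}ᶜ,
          ‖μ z‖ ^ p / (1 - ‖μ z‖ ^ 2) ^ p /
            (‖z‖ ^ 2 * (1 + ‖z‖ / r) ^ s)
        ≤ ∫ z in {z : ℂ | r' ≤ ‖z‖}, M * r ^ s * ‖z‖ ^ (-(2 + s)) := by
      rw [hScomp]
      apply setIntegral_mono_on hIf'.integrableOn (hti.const_mul (M * r ^ s))
        ((isClosed_le continuous_const continuous_norm).measurableSet)
      intro z hz
      have hx : 0 < ‖z‖ := by
        exact lt_of_lt_of_le hr' hz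
      exact hftail r hr z hx
    have h2 : ∫ z in {z : ℂ | r' ≤ ‖z‖}, M * r ^ s * ‖z‖ ^ (-(2 + s))
        = M * r ^ s * ((2 * Real.pi) * (-r' ^ (-(2 + s) + 2) / (-(2 + s) + 2))) := by
      rw [integral_const_mul, htv]
    have e : (-(2 + s) + 2 : ℝ) = -s := by ring
    rw [e] at h2
    have h3 : M * r ^ s * ((2 * Real.pi) * (-r' ^ (-s) / (-s)))
        ≤ (2 * Real.pi * (M + 1) / s) * (r / r') ^ s := by
      rw [neg_div_neg_eq, Real.div_rpow hr.le hr'.le, Real.rpow_neg hr'.le]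
      have hπ := Real.pi_pos
      have hrs : (0:ℝ) ≤ r ^ s := Real.rpow_nonneg hr.le s
      have hr's : (0:ℝ) < r' ^ s := Real.rpow_pos_of_pos hr' s
      have key : M * r ^ s * (2 * Real.pi * ((r' ^ s)⁻¹ / s))
          = (2 * Real.pi * M / s) * (r ^ s / r' ^ s) := by
        field_simp
      rw [key]
      apply mul_le_mul_of_nonneg_right ?_ (by positivity)
      apply (div_le_div_iff_of_pos_right hs0).mpr
      nlinarith
    calc _ ≤ ∫ z in {z : ℂ | r' ≤ ‖z‖}, M * r ^ s * ‖z‖ ^ (-(2 + s)) := h1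
      _ = M * r ^ s * ((2 * Real.pi) * (-r' ^ (-s) / (-s))) := h2
      _ ≤ (2 * Real.pi * (M + 1) / s) * (r / r') ^ s := h3
  have hsplitInt : ∫ z : ℂ, ‖μ z‖ ^ p / (1 - ‖μ z‖ ^ 2) ^ p /
        (‖z‖ ^ 2 * (1 + ‖z‖ / r) ^ s)
      = (∫ z in {z : ℂ | ‖z‖ < r'},
          ‖μ z‖ ^ p / (1 - ‖μ z‖ ^ 2) ^ p /
            (‖z‖ ^ 2 * (1 + ‖z‖ / r) ^ s))
        + ∫ z in {z : ℂ | ‖z‖ < r'}ᶜ,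
            ‖μ z‖ ^ p / (1 - ‖μ z‖ ^ 2) ^ p /
              (‖z‖ ^ 2 * (1 + ‖z‖ / r) ^ s) :=
    (integral_add_compl hS hIf').symm
  have hIps : Ips μ p s r = ∫ z : ℂ, ‖μ z‖ ^ p / (1 - ‖μ z‖ ^ 2) ^ p /
      (‖z‖ ^ 2 * (1 + ‖z‖ / r) ^ s) := rfl
  rw [hIps, hsplitInt]
  exact add_le_add hIS hItail
end
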